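/- For n ≥ 3 and t ≥ 1, let k be the least natural number with k^{t+1} ≥ n. Then the distinguishing number of μ_t(K_n) equals k. In particular, dist(μ(K_n)) = ⌈√n⌉, and if t ≥ log₂(n) − 1 then dist(μ_t(K_n)) = 2. -/

import Mathlib

open SimpleGraph

/-- The generalized Mycielskian `μ_t(G)`: levels `0,…,t` of copies of `V(G)`
plus a root `none`. Level-0 vertices are the original vertices. -/
def genMyc {V : Type*} (G : SimpleGraph V) (t : ℕ) :
    SimpleGraph (Option (Fin (t + 1) × V)) :=
  SimpleGraph.fromRel fun a b =>
    match a, b with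
    | some (s, i), some (s', j) =>
        ((s : ℕ) = 0 ∧ (s' : ℕ) = 0 ∧ G.Adj i j) ∨
        ((s' : ℕ) = (s : ℕ) + 1 ∧ G.Adj i j)
    | some (s, _), none => (s : ℕ) = t
    | _, _ => False

/-- The (traditional) Mycielskian `μ(G)`. -/
def myc {V : Type*} (G : SimpleGraph V) : SimpleGraph (Option (Fin 2 × V)) :=
  genMyc G 1

/-- The star `K_{1,m}` with center `0` and `m` leaves. -/
def starG (m : ℕ) : SimpleGraph (Fin (m + 1)) :=
  SimpleGraph.fromRel fun a _ => a = 0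

/-- A `d`-coloring is distinguishing if only the trivial automorphism preserves it. -/
def IsDistinguishing {V : Type*} (H : SimpleGraph V) (d : ℕ) (c : V → Fin d) : Prop :=
  ∀ φ : H ≃g H, (∀ v, c (φ v) = c v) → ∀ v, φ v = v

/-- The distinguishing number of a graph. -/
noncomputable def distNum {V : Type*} (H : SimpleGraph V) : ℕ :=
  sInf {d | ∃ c : V → Fin d, IsDistinguishing H d c}

namespace GenMycAux

open Finset

noncomputable instance {V : Type*} [Fintype V] (G : SimpleGraph V) (v : V) :
    Fintype (G.neighborSet v) := Fintype.ofFinite _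

variable {n t : ℕ}

lemma adj_ss {s s' : Fin (t+1)} {i j : Fin n} :
    (genMyc (⊤ : SimpleGraph (Fin n)) t).Adj (some (s,i)) (some (s',j)) ↔
      i ≠ j ∧ ((s.val = 0 ∧ s'.val = 0) ∨ s'.val = s.val + 1 ∨ s.val = s'.val + 1) := by
  simp only [genMyc, fromRel_adj, top_adj, ne_eq, Option.some.injEq, Prod.mk.injEq]
  constructor
  · rintro ⟨h, (⟨h1,h2,h3⟩|⟨h1,h2⟩)|(⟨h1,h2,h3⟩|⟨h1,h2⟩)⟩
    · exact ⟨h3, Or.inl ⟨h1,h2⟩⟩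
    · exact ⟨h2, Or.inr (Or.inl h1)⟩
    · exact ⟨Ne.symm h3, Or.inl ⟨h2,h1⟩⟩
    · exact ⟨Ne.symm h2, Or.inr (Or.inr h1)⟩
  · rintro ⟨hij, h⟩
    refine ⟨fun hc => hij hc.2, ?_⟩
    rcases h with ⟨h1,h2⟩ | h | h
    · exact Or.inl (Or.inl ⟨h1,h2,hij⟩)
    · exact Or.inl (Or.inr ⟨h, hij⟩)
    · exact Or.inr (Or.inr ⟨h, Ne.symm hij⟩)

lemma adj_sn {s : Fin (t+1)} {i : Fin n} :
    (genMyc (⊤ : SimpleGraph (Fin n)) t).Adj (some (s,i)) none ↔ s.val = t := by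
  simp only [genMyc, fromRel_adj]
  constructor
  · rintro ⟨h, h1 | h1⟩
    · exact h1
    · exact absurd h1 id
  · exact fun h => ⟨by simp, Or.inl h⟩

lemma adj_ns {s : Fin (t+1)} {i : Fin n} :
    (genMyc (⊤ : SimpleGraph (Fin n)) t).Adj none (some (s,i)) ↔ s.val = t :=
  (genMyc _ t).adj_comm _ _ |>.trans adj_sn

lemma deg_none (hn : 1 ≤ n) :
    (genMyc (⊤ : SimpleGraph (Fin n)) t).degree none = n := by
  have : (genMyc (⊤ : SimpleGraph (Fin n)) t).neighborFinset none
      = Finset.univ.image (fun i : Fin n => some (Fin.last t, i)) := by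
    ext v
    rcases v with _ | ⟨s, i⟩
    · simp [mem_neighborFinset]
    · simp only [mem_neighborFinset, adj_ns, mem_image, mem_univ, true_and,
        Option.some.injEq, Prod.mk.injEq]
      constructor
      · intro h; exact ⟨i, (Fin.ext h.symm : Fin.last t = s), rfl⟩
      · rintro ⟨a, h1, h2⟩; subst h2; rw [← h1]; rfl
  rw [SimpleGraph.degree, this, Finset.card_image_of_injective _ (by intro a b h; simpa using h)]
  simp

lemma deg_top (hn : 1 ≤ n) (ht : 1 ≤ t) {s : Fin (t+1)} (hs : s.val = t) (i : Fin n) :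
    (genMyc (⊤ : SimpleGraph (Fin n)) t).degree (some (s, i)) = n := by
  have hlt : t - 1 < t + 1 := by omega
  have : (genMyc (⊤ : SimpleGraph (Fin n)) t).neighborFinset (some (s,i))
      = insert none ((Finset.univ.erase i).image (fun j : Fin n => some (⟨t-1, hlt⟩, j))) := by
    ext v
    rcases v with _ | ⟨s', j⟩
    · simp [mem_neighborFinset, adj_sn, hs]
    · simp only [mem_neighborFinset, adj_ss, mem_insert, mem_image, mem_erase, mem_univ,
        and_true, Option.some.injEq, Prod.mk.injEq, hs, false_or, reduceCtorEq]
      constructor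
      · rintro ⟨hij, h⟩
        have hs' : s'.val = t - 1 := by omega
        exact ⟨j, Ne.symm hij, Fin.ext hs'.symm, rfl⟩
      · rintro ⟨a, ha, h1, h2⟩; subst h2
        have : s'.val = t - 1 := by rw [← h1]
        exact ⟨Ne.symm ha, by omega⟩
  rw [SimpleGraph.degree, this, Finset.card_insert_of_notMem (by simp),
    Finset.card_image_of_injective _ (by intro a b h; simpa using h), Finset.card_erase_of_mem (mem_univ i)]
  simp
  omega

lemma deg_mid (hn : 1 ≤ n) {s : Fin (t+1)} (hs : s.val < t) (i : Fin n) :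
    (genMyc (⊤ : SimpleGraph (Fin n)) t).degree (some (s, i)) = 2 * n - 2 := by
  have h1 : s.val - 1 < t + 1 := by omega
  have h2 : s.val + 1 < t + 1 := by omega
  have : (genMyc (⊤ : SimpleGraph (Fin n)) t).neighborFinset (some (s,i))
      = (Finset.univ.erase i).image (fun j : Fin n => some (⟨s.val-1, h1⟩, j))
        ∪ (Finset.univ.erase i).image (fun j : Fin n => some (⟨s.val+1, h2⟩, j)) := by
    ext v
    rcases v with _ | ⟨s', j⟩
    · simp [mem_neighborFinset, adj_sn]; omega
    · simp only [mem_neighborFinset, adj_ss, mem_union, mem_image, mem_erase, mem_univ,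
        and_true, Option.some.injEq, Prod.mk.injEq]
      constructor
      · rintro ⟨hij, h⟩
        have : s'.val = s.val - 1 ∨ s'.val = s.val + 1 := by omega
        rcases this with h' | h'
        · exact Or.inl ⟨j, Ne.symm hij, Fin.ext h'.symm, rfl⟩
        · exact Or.inr ⟨j, Ne.symm hij, Fin.ext h'.symm, rfl⟩
      · rintro (⟨a, ha, hl, hj⟩ | ⟨a, ha, hl, hj⟩) <;> subst hj
        · have : s'.val = s.val - 1 := by rw [← hl]
          exact ⟨Ne.symm ha, by omega⟩
        · have : s'.val = s.val + 1 := by rw [← hl]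
          exact ⟨Ne.symm ha, by omega⟩
  rw [SimpleGraph.degree, this, Finset.card_union_of_disjoint, Finset.card_image_of_injective _
    (by intro a b h; simpa using h), Finset.card_image_of_injective _ (by intro a b h; simpa using h),
    Finset.card_erase_of_mem (mem_univ i)]
  · simp; omega
  · rw [Finset.disjoint_left]
    rintro x hx hx'
    simp only [mem_image, mem_erase] at hx hx'
    obtain ⟨a, _, rfl⟩ := hx
    obtain ⟨b, _, hb⟩ := hx'
    have := (Option.some.injEq _ _ ▸ hb)
    simp only [Prod.mk.injEq] at this
    have := congrArg Fin.val this.1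
    simp at this
    omega

lemma pick_ne (hn : 3 ≤ n) (i : Fin n) : ∃ j : Fin n, i ≠ j := by
  by_cases h : i.val = 0
  · exact ⟨⟨1, by omega⟩, fun hc => by have := congrArg Fin.val hc; simp [h] at this⟩
  · exact ⟨⟨0, by omega⟩, fun hc => by have := congrArg Fin.val hc; simp at this; omega⟩

/-- the level function -/
def lvl : Option (Fin (t+1) × Fin n) → ℕ
  | none => t + 1
  | some (s, _) => s.val

lemma lvl_lip {a b : Option (Fin (t+1) × Fin n)}
    (h : (genMyc (⊤ : SimpleGraph (Fin n)) t).Adj a b) :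
    lvl a ≤ lvl b + 1 ∧ lvl b ≤ lvl a + 1 := by
  rcases a with _ | ⟨s, i⟩ <;> rcases b with _ | ⟨s', j⟩
  · simp at h
  · rw [adj_ns] at h; simp [lvl]; omega
  · rw [adj_sn] at h; simp [lvl]; omega
  · rw [adj_ss] at h; simp [lvl]; omega

lemma lvl_walk {a b : Option (Fin (t+1) × Fin n)}
    (p : (genMyc (⊤ : SimpleGraph (Fin n)) t).Walk a b) :
    lvl a ≤ lvl b + p.length ∧ lvl b ≤ lvl a + p.length := by
  induction p with
  | nil => simp
  | cons h p ih =>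
    have := lvl_lip h
    simp only [Walk.length_cons]
    omega

lemma exists_walk (hn : 3 ≤ n) (m : ℕ) :
    ∀ (s : Fin (t+1)) (i : Fin n), s.val + m = t →
    ∃ p : (genMyc (⊤ : SimpleGraph (Fin n)) t).Walk (some (s,i)) none, p.length = m + 1 := by
  induction m with
  | zero =>
    intro s i hs
    exact ⟨Walk.cons (adj_sn.mpr (by omega)) Walk.nil, by simp⟩
  | succ m ih =>
    intro s i hs
    have h2 : s.val + 1 < t + 1 := by omega
    obtain ⟨j, hij⟩ := pick_ne hn i
    obtain ⟨p, hp⟩ := ih ⟨s.val + 1, h2⟩ j (by simp; omega)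
    refine ⟨Walk.cons (adj_ss.mpr ⟨hij, Or.inr (Or.inl rfl)⟩) p, by simp [hp]⟩

lemma dist_none (hn : 3 ≤ n) (s : Fin (t+1)) (i : Fin n) :
    (genMyc (⊤ : SimpleGraph (Fin n)) t).dist (some (s,i)) none = t + 1 - s.val := by
  obtain ⟨p, hp⟩ := exists_walk hn (t - s.val) s i (by omega)
  have hs : s.val ≤ t := by omega
  apply le_antisymm
  · have := SimpleGraph.dist_le p
    omega
  · obtain ⟨q, hq⟩ := (Reachable.exists_walk_length_eq_dist ⟨p⟩ :
      ∃ q : (genMyc (⊤ : SimpleGraph (Fin n)) t).Walk (some (s,i)) none,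
        q.length = (genMyc (⊤ : SimpleGraph (Fin n)) t).dist (some (s,i)) none)
    have := lvl_walk q
    simp [lvl] at this
    omega

section Phi
variable (φ : (genMyc (⊤ : SimpleGraph (Fin n)) t) ≃g (genMyc (⊤ : SimpleGraph (Fin n)) t))

lemma phi_deg (v : Option (Fin (t+1) × Fin n)) :
    (genMyc (⊤ : SimpleGraph (Fin n)) t).degree (φ v) =
    (genMyc (⊤ : SimpleGraph (Fin n)) t).degree v := by
  rw [← card_neighborSet_eq_degree, ← card_neighborSet_eq_degree]
  exact Fintype.card_congr (φ.mapNeighborSet v).symm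

lemma fix_none (hn : 3 ≤ n) (ht : 1 ≤ t) : φ none = none := by
  rcases hv : φ none with _ | ⟨s, i⟩
  · rfl
  exfalso
  have hn1 : 1 ≤ n := by omega
  have hd : (genMyc (⊤ : SimpleGraph (Fin n)) t).degree (some (s,i)) = n := by
    rw [← hv, phi_deg, deg_none hn1]
  have hst : s.val = t := by
    by_contra h
    have hlt' : s.val < t := by omega
    rw [deg_mid hn1 hlt'] at hd
    omega
  -- pick u at level t-1 adjacent to φ none
  have hlt : t - 1 < t + 1 := by omega
  obtain ⟨j, hij⟩ := pick_ne hn i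
  have hadj : (genMyc (⊤ : SimpleGraph (Fin n)) t).Adj (some (s,i)) (some (⟨t-1,hlt⟩, j)) :=
    adj_ss.mpr ⟨hij, Or.inr (Or.inr (by simp; omega))⟩
  -- pull back
  have hadj' : (genMyc (⊤ : SimpleGraph (Fin n)) t).Adj none (φ.symm (some (⟨t-1,hlt⟩, j))) := by
    have := φ.symm.map_adj_iff.mpr (hv ▸ hadj)
    simpa using this
  rcases hx : φ.symm (some (⟨t-1,hlt⟩, j)) with _ | ⟨s', m⟩
  · rw [hx] at hadj'; simp at hadj'
  · rw [hx] at hadj'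
    have hs' : s'.val = t := adj_ns.mp hadj'
    have hdj : (genMyc (⊤ : SimpleGraph (Fin n)) t).degree (some (⟨t-1,hlt⟩, j)) = n := by
      have h5 := phi_deg φ (some (s', m))
      rw [deg_top hn1 ht hs'] at h5
      have h6 : φ (some (s', m)) = some (⟨t-1,hlt⟩, j) := by
        rw [← hx, RelIso.apply_symm_apply]
      rw [← h6]; exact h5
    have hmidlvl : (⟨t-1,hlt⟩ : Fin (t+1)).val < t := by simp; omega
    rw [deg_mid hn1 hmidlvl] at hdj
    omega

lemma level_pres (hn : 3 ≤ n) (ht : 1 ≤ t) (hφ : φ none = none) (s : Fin (t+1)) (i : Fin n) :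
    ∃ j, φ (some (s,i)) = some (s, j) := by
  rcases hv : φ (some (s,i)) with _ | ⟨s', j⟩
  · exfalso
    exact Option.some_ne_none _ (φ.injective (hv.trans hφ.symm))
  refine ⟨j, ?_⟩
  -- distances
  have hd1 : (genMyc (⊤ : SimpleGraph (Fin n)) t).dist (some (s',j)) none
      ≤ (genMyc (⊤ : SimpleGraph (Fin n)) t).dist (some (s,i)) none := by
    obtain ⟨p, hp⟩ := exists_walk hn (t - s.val) s i (by omega)
    obtain ⟨q, hq⟩ := (Reachable.exists_walk_length_eq_dist ⟨p⟩ :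
      ∃ q : (genMyc (⊤ : SimpleGraph (Fin n)) t).Walk (some (s,i)) none,
        q.length = (genMyc (⊤ : SimpleGraph (Fin n)) t).dist (some (s,i)) none)
    have := SimpleGraph.dist_le ((q.map φ.toHom).copy hv hφ)
    simpa [hq] using this
  have hd2 : (genMyc (⊤ : SimpleGraph (Fin n)) t).dist (some (s,i)) none
      ≤ (genMyc (⊤ : SimpleGraph (Fin n)) t).dist (some (s',j)) none := by
    obtain ⟨p, hp⟩ := exists_walk hn (t - s'.val) s' j (by omega)
    obtain ⟨q, hq⟩ := (Reachable.exists_walk_length_eq_dist ⟨p⟩ :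
      ∃ q : (genMyc (⊤ : SimpleGraph (Fin n)) t).Walk (some (s',j)) none,
        q.length = (genMyc (⊤ : SimpleGraph (Fin n)) t).dist (some (s',j)) none)
    have hsymm : φ.symm (some (s',j)) = some (s,i) :=
      φ.injective (by rw [RelIso.apply_symm_apply, hv])
    have hsn : φ.symm none = none :=
      φ.injective (by rw [RelIso.apply_symm_apply, hφ])
    have := SimpleGraph.dist_le ((q.map φ.symm.toHom).copy hsymm hsn)
    simpa [hq] using this
  have heq := le_antisymm hd1 hd2
  rw [dist_none hn, dist_none hn] at heq
  have : s' = s := Fin.ext (by omega)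
  rw [this]

lemma column_step (hn : 3 ≤ n) (ht : 1 ≤ t) (hφ : φ none = none)
    {s s₁ : Fin (t+1)} (hs : s₁.val = s.val + 1) {i j : Fin n}
    (h : φ (some (s, i)) = some (s, j)) : φ (some (s₁, i)) = some (s₁, j) := by
  obtain ⟨j', hj'⟩ := level_pres φ hn ht hφ s₁ i
  rw [hj']
  congr 1
  by_contra hne
  have hne' : j' ≠ j := fun hc => hne (by rw [hc])
  have hadj : (genMyc (⊤ : SimpleGraph (Fin n)) t).Adj (some (s, j)) (some (s₁, j')) :=
    adj_ss.mpr ⟨Ne.symm hne', Or.inr (Or.inl hs)⟩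
  rw [← h, ← hj'] at hadj
  have := φ.map_adj_iff.mp hadj
  rw [adj_ss] at this
  exact this.1 rfl

lemma column_all (hn : 3 ≤ n) (ht : 1 ≤ t) (hφ : φ none = none)
    {i j : Fin n} (h : φ (some (⟨0, by omega⟩, i)) = some (⟨0, by omega⟩, j)) :
    ∀ s : Fin (t+1), φ (some (s, i)) = some (s, j) := by
  have key : ∀ m : ℕ, ∀ hm : m < t + 1, φ (some (⟨m, hm⟩, i)) = some (⟨m, hm⟩, j) := by
    intro m
    induction m with
    | zero => intro hm; exact h
    | succ m ih =>
      intro hm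
      exact column_step φ hn ht hφ (by simp) (ih (by omega))
  intro s
  have := key s.val s.isLt
  simpa using this

end Phi

lemma upper (hn : 3 ≤ n) (ht : 1 ≤ t) {k : ℕ} (hk : n ≤ k ^ (t + 1)) (hk2 : 2 ≤ k) :
    ∃ c : Option (Fin (t+1) × Fin n) → Fin k,
      IsDistinguishing (genMyc (⊤ : SimpleGraph (Fin n)) t) k c := by
  have hcard : Fintype.card (Fin n) ≤ Fintype.card (Fin (t+1) → Fin k) := by
    simp [hk]
  obtain ⟨g⟩ := Function.Embedding.nonempty_of_card_le hcard
  refine ⟨fun v => match v with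
    | none => ⟨0, by omega⟩
    | some (s, i) => g i s, ?_⟩
  intro φ hc v
  have hφ : φ none = none := fix_none φ hn ht
  rcases v with _ | ⟨s, i⟩
  · exact hφ
  obtain ⟨j, hj⟩ := level_pres φ hn ht hφ ⟨0, by omega⟩ i
  have hall := column_all φ hn ht hφ hj
  have hgij : g j = g i := by
    funext s'
    have := hc (some (s', i))
    rw [hall s'] at this
    exact this
  have : j = i := g.injective hgij
  rw [hall s, this]

lemma lower (hn : 3 ≤ n) {d : ℕ}
    (h : ∃ c : Option (Fin (t+1) × Fin n) → Fin d,
      IsDistinguishing (genMyc (⊤ : SimpleGraph (Fin n)) t) d c) :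
    n ≤ d ^ (t + 1) := by
  by_contra hlt
  push_neg at hlt
  obtain ⟨c, hc⟩ := h
  have hcard : Fintype.card (Fin (t+1) → Fin d) < Fintype.card (Fin n) := by
    simp [hlt]
  obtain ⟨i, j, hij, hvec⟩ := Fintype.exists_ne_map_eq_of_card_lt
    (fun i : Fin n => fun s : Fin (t+1) => c (some (s, i))) hcard
  -- swap automorphism
  set e : Option (Fin (t+1) × Fin n) ≃ Option (Fin (t+1) × Fin n) :=
    ((Equiv.refl (Fin (t+1))).prodCongr (Equiv.swap i j)).optionCongr with he
  have hes : ∀ (s : Fin (t+1)) (m : Fin n), e (some (s, m)) = some (s, Equiv.swap i j m) := by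
    intro s m; rfl
  have hen : e none = none := rfl
  have hiso : ∀ a b, (genMyc (⊤ : SimpleGraph (Fin n)) t).Adj (e a) (e b) ↔
      (genMyc (⊤ : SimpleGraph (Fin n)) t).Adj a b := by
    intro a b
    rcases a with _ | ⟨s, x⟩ <;> rcases b with _ | ⟨s', y⟩
    · rfl
    · rw [hen, hes, adj_ns, adj_ns]
    · rw [hes, hen, adj_sn, adj_sn]
    · rw [hes, hes, adj_ss, adj_ss]
      have : Equiv.swap i j x ≠ Equiv.swap i j y ↔ x ≠ y := (Equiv.swap i j).injective.ne_iff
      rw [this]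
  set ψ : (genMyc (⊤ : SimpleGraph (Fin n)) t) ≃g (genMyc (⊤ : SimpleGraph (Fin n)) t) :=
    ⟨e, fun {a b} => hiso a b⟩ with hψ
  have hpres : ∀ v, c (ψ v) = c v := by
    intro v
    rcases v with _ | ⟨s, m⟩
    · rfl
    · show c (e (some (s, m))) = _
      rw [hes]
      by_cases hmi : m = i
      · subst hmi
        rw [Equiv.swap_apply_left]
        exact (congrFun hvec s).symm
      by_cases hmj : m = j
      · subst hmj
        rw [Equiv.swap_apply_right]
        exact congrFun hvec s
      · rw [Equiv.swap_apply_of_ne_of_ne hmi hmj]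
  have := hc ψ hpres (some (⟨0, by omega⟩, i))
  have h2 : ψ (some (⟨0, by omega⟩, i)) = some (⟨0, by omega⟩, j) := by
    have := hes ⟨0, by omega⟩ i
    rw [Equiv.swap_apply_left] at this
    exact this
  rw [h2] at this
  apply hij
  injection this with h3
  exact (Prod.mk.injEq .. ▸ h3 : _ ∧ _).2.symm

lemma main (n t k : ℕ) (hn : 3 ≤ n) (ht : 1 ≤ t)
    (hk : n ≤ k ^ (t + 1)) (hk' : ∀ j : ℕ, j < k → j ^ (t + 1) < n) :
    distNum (genMyc (⊤ : SimpleGraph (Fin n)) t) = k := by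
  have hk2 : 2 ≤ k := by
    by_contra h
    have : k ^ (t+1) ≤ 1 := by
      calc k ^ (t+1) ≤ 1 ^ (t+1) := Nat.pow_le_pow_left (by omega) _
      _ = 1 := one_pow _
    omega
  have hmem : k ∈ {d | ∃ c : Option (Fin (t+1) × Fin n) → Fin d,
      IsDistinguishing (genMyc (⊤ : SimpleGraph (Fin n)) t) d c} := upper hn ht hk hk2
  apply le_antisymm
  · exact Nat.sInf_le hmem
  · by_contra h
    push_neg at h
    have hd : distNum (genMyc (⊤ : SimpleGraph (Fin n)) t)
        = sInf {d | ∃ c : Option (Fin (t+1) × Fin n) → Fin d,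
            IsDistinguishing (genMyc (⊤ : SimpleGraph (Fin n)) t) d c} := rfl
    rw [hd] at h
    have hsm := Nat.sInf_mem (⟨k, hmem⟩ : Set.Nonempty _)
    have h1 := lower hn hsm
    have h2 := hk' _ h
    omega

end GenMycAux

theorem stmt_16 (n t k : ℕ) (hn : 3 ≤ n) (ht : 1 ≤ t)
    (hk : n ≤ k ^ (t + 1)) (hk' : ∀ j : ℕ, j < k → j ^ (t + 1) < n) :
    distNum (genMyc (⊤ : SimpleGraph (Fin n)) t) = k ∧
    distNum (myc (⊤ : SimpleGraph (Fin n))) = ⌈Real.sqrt n⌉₊ ∧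
    (Real.logb 2 n - 1 ≤ (t : ℝ) →
      distNum (genMyc (⊤ : SimpleGraph (Fin n)) t) = 2) := by
  refine ⟨GenMycAux.main n t k hn ht hk hk', ?_, ?_⟩
  · have hsq : n ≤ ⌈Real.sqrt n⌉₊ ^ (1 + 1) := by
      have h1 : (Real.sqrt n) ≤ (⌈Real.sqrt n⌉₊ : ℝ) := Nat.le_ceil _
      have h2 : (n : ℝ) ≤ (⌈Real.sqrt n⌉₊ : ℝ) ^ 2 := by
        calc (n : ℝ) = Real.sqrt n ^ 2 := (Real.sq_sqrt (by positivity)).symm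
        _ ≤ _ := pow_le_pow_left₀ (Real.sqrt_nonneg _) h1 2
      exact_mod_cast h2
    have hsq' : ∀ j : ℕ, j < ⌈Real.sqrt n⌉₊ → j ^ (1 + 1) < n := by
      intro j hj
      have h1 : (j : ℝ) < Real.sqrt n := Nat.lt_ceil.mp hj
      have h2 : (j : ℝ) ^ 2 < (n : ℝ) := by
        have := pow_lt_pow_left₀ h1 (by positivity : (0:ℝ) ≤ (j:ℝ)) (two_ne_zero)
        calc (j:ℝ)^2 < Real.sqrt n ^ 2 := this
        _ = (n:ℝ) := Real.sq_sqrt (by positivity)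
      exact_mod_cast h2
    exact GenMycAux.main n 1 _ hn le_rfl hsq hsq'
  · intro hlog
    have h2 : 2 ≤ k := by
      by_contra h
      have : k ^ (t+1) ≤ 1 := by
        calc k ^ (t+1) ≤ 1 ^ (t+1) := Nat.pow_le_pow_left (by omega) _
        _ = 1 := one_pow _
      omega
    have hke : k = 2 := by
      by_contra hne
      have h3 : 2 < k := by omega
      have h4 := hk' 2 h3
      have h5 : (n : ℝ) ≤ (2:ℝ) ^ ((t:ℝ) + 1) := by
        rw [← Real.rpow_logb (b := 2) (x := (n:ℝ)) (by norm_num) (by norm_num) (by positivity)]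
        exact Real.rpow_le_rpow_of_exponent_le (by norm_num) (by linarith)
      have h6 : ((2:ℝ)) ^ ((t:ℝ) + 1) = ((2 ^ (t+1) : ℕ) : ℝ) := by
        push_cast
        rw [← Real.rpow_natCast 2 (t+1)]
        push_cast
        ring_nf
      rw [h6] at h5
      have : n ≤ 2 ^ (t+1) := by exact_mod_cast h5
      omega
    rw [← hke]
    exact GenMycAux.main n t k hn ht hk hk'
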